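/- Let A1 := A^{(1)}[(5,6,7)→(2,3,4)], A2 := A^{(2)}[(1,6,7)→(5,3,4)], A3 := A^{(3)}[(1,2,7)→(5,6,4)], A4 := A^{(4)}[(1,2,3)→(5,6,7)], A5 := A^{(5)}[(1,6,7)→(2,3,4)], A6 := A^{(6)}[(1,2,7)→(5,3,4)], A7 := A^{(7)}[(1,2,3)→(5,6,4)]. For a 3×3 matrix M and distinct positions r<s<t in {1,…,6}, let M_{rst} denote the 6×6 matrix over F that acts as M on the coordinates (r,s,t) (in that order) and as the identity on the remaining three coordinates. Then the heptagon relation holds: (A1)_{123} · (A2)_{145} · (A3)_{246} · (A4)_{356} = (A7)_{356} · (A6)_{245} · (A5)_{123} as 6×6 matrices over F. -/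

import Mathlib

/-- The determinant `d_{ijk}` built from the columns `(α_i,β_i,γ_i)`, `(α_j,β_j,γ_j)`,
`(α_k,β_k,γ_k)`. -/
noncomputable def dd {F : Type*} [Field F] (al be ga : Fin 7 → F) (i j k : Fin 7) : F :=
  Matrix.det !![al i, al j, al k; be i, be j, be k; ga i, ga j, ga k]

/-- The ansatz matrix `A^{(p)}[(i₁,i₂,i₃)→(o₁,o₂,o₃)]`: its `(a,b)` entry is
`d_{j,o_b,p}·d_{k,o_b,p}/(d_{i_a,j,p}·d_{i_a,k,p})` where `{j,k}` are the two inputs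
other than `i_a` (chosen cyclically; the expression is symmetric in `j,k`). -/
noncomputable def ansatz {F : Type*} [Field F] (al be ga : Fin 7 → F) (p : Fin 7)
    (inp out : Fin 3 → Fin 7) : Matrix (Fin 3) (Fin 3) F := fun a b =>
  dd al be ga (inp (a + 1)) (out b) p * dd al be ga (inp (a + 2)) (out b) p /
    (dd al be ga (inp a) (inp (a + 1)) p * dd al be ga (inp a) (inp (a + 2)) p)

/-- `embed3 p0 p1 p2 M` is the 6×6 matrix acting as the 3×3 matrix `M` on the
(distinct) coordinates `(p0,p1,p2)` (in that order) and as the identity on the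
remaining coordinates. -/
noncomputable def embed3 {F : Type*} [Field F] (p0 p1 p2 : Fin 6)
    (M : Matrix (Fin 3) (Fin 3) F) : Matrix (Fin 6) (Fin 6) F := fun r c =>
  if r = p0 then (if c = p0 then M 0 0 else if c = p1 then M 0 1 else if c = p2 then M 0 2 else 0)
  else if r = p1 then
    (if c = p0 then M 1 0 else if c = p1 then M 1 1 else if c = p2 then M 1 2 else 0)
  else if r = p2 then
    (if c = p0 then M 2 0 else if c = p1 then M 2 1 else if c = p2 then M 2 2 else 0)
  else if r = c then 1 else 0

namespace HeptagonAux

theorem cons_val_five {α : Type*} {m : ℕ} (x : α) (u : Fin (m + 5) → α) :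
    Matrix.vecCons x u 5 =
      Matrix.vecHead (Matrix.vecTail (Matrix.vecTail (Matrix.vecTail (Matrix.vecTail u)))) :=
  rfl

def dg {F : Type*} [Field F] (x y z : Fin 3 → F) : F :=
  x 0 * (y 1 * z 2 - y 2 * z 1) - y 0 * (x 1 * z 2 - x 2 * z 1) + z 0 * (x 1 * y 2 - x 2 * y 1)

def colv {F : Type*} [Field F] (al be ga : Fin 7 → F) (i : Fin 7) : Fin 3 → F :=
  ![al i, be i, ga i]

theorem dd_eq {F : Type*} [Field F] (al be ga : Fin 7 → F) (i j k : Fin 7) :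
    dd al be ga i j k = dg (colv al be ga i) (colv al be ga j) (colv al be ga k) := by
  simp [dd, dg, colv, Matrix.det_fin_three]; ring

theorem plucker {F : Type*} [Field F] (a b c e p : Fin 3 → F) :
    dg a b p * dg c e p - dg a c p * dg b e p + dg a e p * dg b c p = 0 := by
  simp only [dg]; ring

theorem master' {F : Type*} [Field F] (c1 c2 x y z o p : Fin 3 → F) :
    dg c1 x p * dg c2 x p * (dg y o p * dg z o p) * dg y z p
    - dg c1 y p * dg c2 y p * (dg x o p * dg z o p) * dg x z p
    + dg c1 z p * dg c2 z p * (dg x o p * dg y o p) * dg x y p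
    - dg c1 o p * dg c2 o p * (dg x y p * dg x z p) * dg y z p = 0 := by
  have hP1 := plucker c1 x y o p
  have hP2 := plucker c2 x z o p
  have hP3 := plucker c1 x y z p
  have hP4 := plucker x y z o p
  have hP5 := plucker c2 x y z p
  linear_combination
    (-(dg y z p * ((dg c2 z p * dg x o p - dg c2 x p * dg z o p)
        + (dg c2 x p * dg z o p - dg c2 z p * dg x o p + dg c2 o p * dg x z p)))) * hP1
    + (-(dg y z p * (dg c1 y p * dg x o p - dg c1 x p * dg y o p))) * hP2
    + (dg x o p * dg c2 z p * dg y o p) * hP3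
    + (-(dg x o p * dg c1 y p * dg c2 z p)) * hP4
    + (dg x o p * dg c1 y p * dg z o p) * hP5

theorem dg_swap12 {F : Type*} [Field F] (x y z : Fin 3 → F) : dg y x z = -dg x y z := by
  simp only [dg]; ring

theorem master {F : Type*} [Field F] (c1 c2 x y z o p : Fin 3 → F)
    (hxy : dg x y p ≠ 0) (hxz : dg x z p ≠ 0) (hyz : dg y z p ≠ 0) :
    dg c1 x p * dg c2 x p * (dg y o p * dg z o p / (dg x y p * dg x z p))
    + dg c1 y p * dg c2 y p * (dg z o p * dg x o p / (dg y z p * dg y x p))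
    + dg c1 z p * dg c2 z p * (dg x o p * dg y o p / (dg z x p * dg z y p))
    = dg c1 o p * dg c2 o p := by
  rw [dg_swap12 x y p, dg_swap12 x z p, dg_swap12 y z p]
  have h := master' c1 c2 x y z o p
  field_simp
  linear_combination h

theorem dd_swap23 {F : Type*} [Field F] (al be ga : Fin 7 → F) (a i j : Fin 7) :
    dd al be ga a i j = -dd al be ga a j i := by
  simp [dd, Matrix.det_fin_three]; ring

theorem ddQswap {F : Type*} [Field F] (al be ga : Fin 7 → F) (c1 c2 i j : Fin 7) :
    dd al be ga c1 i j * dd al be ga c2 i j = dd al be ga c1 j i * dd al be ga c2 j i := by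
  rw [dd_swap23 al be ga c1 i j, dd_swap23 al be ga c2 i j]; ring

theorem masterddA {F : Type*} [Field F] (al be ga : Fin 7 → F) (c1 c2 x y z o p : Fin 7)
    (hxy : dd al be ga x y p ≠ 0) (hxz : dd al be ga x z p ≠ 0)
    (hyz : dd al be ga y z p ≠ 0) :
    dd al be ga c1 x p * dd al be ga c2 x p *
      (dd al be ga y o p * dd al be ga z o p / (dd al be ga x y p * dd al be ga x z p))
    + dd al be ga c1 y p * dd al be ga c2 y p *
      (dd al be ga z o p * dd al be ga x o p / (dd al be ga y z p * dd al be ga y x p))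
    + dd al be ga c1 z p * dd al be ga c2 z p *
      (dd al be ga x o p * dd al be ga y o p / (dd al be ga z x p * dd al be ga z y p))
    = dd al be ga c1 o p * dd al be ga c2 o p := by
  simp only [dd_eq] at *
  exact master _ _ _ _ _ _ _ hxy hxz hyz

theorem masterddB {F : Type*} [Field F] (al be ga : Fin 7 → F) (c1 c2 x y z o p : Fin 7)
    (hxy : dd al be ga x y p ≠ 0) (hxz : dd al be ga x z p ≠ 0)
    (hyz : dd al be ga y z p ≠ 0) :
    dd al be ga c1 x p * dd al be ga c2 x p *
      (dd al be ga y o p * dd al be ga z o p / (dd al be ga x y p * dd al be ga x z p))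
    + dd al be ga c1 y p * dd al be ga c2 y p *
      (dd al be ga z o p * dd al be ga x o p / (dd al be ga y z p * dd al be ga y x p))
    + dd al be ga c1 z p * dd al be ga c2 z p *
      (dd al be ga x o p * dd al be ga y o p / (dd al be ga z x p * dd al be ga z y p))
    = dd al be ga c1 p o * dd al be ga c2 p o := by
  rw [ddQswap al be ga c1 c2 p o]
  exact masterddA al be ga c1 c2 x y z o p hxy hxz hyz

/-- state matrix -/
noncomputable def SS {F : Type*} [Field F] (al be ga : Fin 7 → F)
    (u v : Fin 6 → Fin 7) : Matrix (Fin 6) (Fin 6) F := fun t s =>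
  dd al be ga (![5,4,4,0,0,0] t) (u s) (v s) * dd al be ga (![6,6,5,3,5,1] t) (u s) (v s)

section Steps
variable {F : Type*} [Field F] (al be ga : Fin 7 → F)

theorem step1 (hgen : ∀ i j k : Fin 7, i ≠ j → i ≠ k → j ≠ k → dd al be ga i j k ≠ 0) :
    SS al be ga ![4,5,0,5,1,2] ![0,0,6,1,6,6] *
      embed3 0 1 2 (ansatz al be ga 0 ![4, 5, 6] ![1, 2, 3]) =
    SS al be ga ![0,0,0,5,1,2] ![1,2,3,1,6,6] := by
  ext t s
  rw [Matrix.mul_apply, Fin.sum_univ_six]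
  fin_cases s <;> simp [SS, embed3, ansatz, cons_val_five] <;>
    rw [ddQswap al be ga (![5,4,4,0,0,0] t) (![6,6,5,3,5,1] t) 0 6] <;>
    exact masterddB al be ga _ _ 4 5 6 _ 0
      (hgen 4 5 0 (by decide) (by decide) (by decide))
      (hgen 4 6 0 (by decide) (by decide) (by decide))
      (hgen 5 6 0 (by decide) (by decide) (by decide))

theorem step2 (hgen : ∀ i j k : Fin 7, i ≠ j → i ≠ k → j ≠ k → dd al be ga i j k ≠ 0) :
    SS al be ga ![0,0,0,5,1,2] ![1,2,3,1,6,6] *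
      embed3 0 3 4 (ansatz al be ga 1 ![0, 5, 6] ![4, 2, 3]) =
    SS al be ga ![1,0,0,1,1,2] ![4,2,3,2,3,6] := by
  ext t s
  rw [Matrix.mul_apply, Fin.sum_univ_six]
  fin_cases s <;> simp [SS, embed3, ansatz, cons_val_five] <;>
    rw [ddQswap al be ga (![5,4,4,0,0,0] t) (![6,6,5,3,5,1] t) 1 6] <;>
    exact masterddB al be ga _ _ 0 5 6 _ 1
      (hgen 0 5 1 (by decide) (by decide) (by decide))
      (hgen 0 6 1 (by decide) (by decide) (by decide))
      (hgen 5 6 1 (by decide) (by decide) (by decide))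

theorem step3 (hgen : ∀ i j k : Fin 7, i ≠ j → i ≠ k → j ≠ k → dd al be ga i j k ≠ 0) :
    SS al be ga ![1,0,0,1,1,2] ![4,2,3,2,3,6] *
      embed3 1 3 5 (ansatz al be ga 2 ![0, 1, 6] ![4, 5, 3]) =
    SS al be ga ![1,2,0,2,1,2] ![4,4,3,5,3,3] := by
  ext t s
  rw [Matrix.mul_apply, Fin.sum_univ_six]
  fin_cases s <;> simp [SS, embed3, ansatz, cons_val_five] <;>
    rw [ddQswap al be ga (![5,4,4,0,0,0] t) (![6,6,5,3,5,1] t) 2 6] <;>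
    exact masterddB al be ga _ _ 0 1 6 _ 2
      (hgen 0 1 2 (by decide) (by decide) (by decide))
      (hgen 0 6 2 (by decide) (by decide) (by decide))
      (hgen 1 6 2 (by decide) (by decide) (by decide))

theorem step4 (hgen : ∀ i j k : Fin 7, i ≠ j → i ≠ k → j ≠ k → dd al be ga i j k ≠ 0) :
    SS al be ga ![1,2,0,2,1,2] ![4,4,3,5,3,3] *
      embed3 2 4 5 (ansatz al be ga 3 ![0, 1, 2] ![4, 5, 6]) =
    SS al be ga ![1,2,3,2,3,3] ![4,4,4,5,5,6] := by
  ext t s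
  rw [Matrix.mul_apply, Fin.sum_univ_six]
  fin_cases s <;> simp [SS, embed3, ansatz, cons_val_five] <;>
    exact masterddB al be ga _ _ 0 1 2 _ 3
      (hgen 0 1 3 (by decide) (by decide) (by decide))
      (hgen 0 2 3 (by decide) (by decide) (by decide))
      (hgen 1 2 3 (by decide) (by decide) (by decide))

theorem step7 (hgen : ∀ i j k : Fin 7, i ≠ j → i ≠ k → j ≠ k → dd al be ga i j k ≠ 0) :
    SS al be ga ![4,5,0,5,1,2] ![0,0,6,1,6,6] *
      embed3 2 4 5 (ansatz al be ga 6 ![0, 1, 2] ![4, 5, 3]) =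
    SS al be ga ![4,5,6,5,6,3] ![0,0,4,1,5,6] := by
  ext t s
  rw [Matrix.mul_apply, Fin.sum_univ_six]
  fin_cases s <;> simp [SS, embed3, ansatz, cons_val_five] <;>
    first
    | exact masterddB al be ga _ _ 0 1 2 _ 6
        (hgen 0 1 6 (by decide) (by decide) (by decide))
        (hgen 0 2 6 (by decide) (by decide) (by decide))
        (hgen 1 2 6 (by decide) (by decide) (by decide))
    | exact masterddA al be ga _ _ 0 1 2 _ 6
        (hgen 0 1 6 (by decide) (by decide) (by decide))
        (hgen 0 2 6 (by decide) (by decide) (by decide))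
        (hgen 1 2 6 (by decide) (by decide) (by decide))

theorem step6 (hgen : ∀ i j k : Fin 7, i ≠ j → i ≠ k → j ≠ k → dd al be ga i j k ≠ 0) :
    SS al be ga ![4,5,6,5,6,3] ![0,0,4,1,5,6] *
      embed3 1 3 4 (ansatz al be ga 5 ![0, 1, 6] ![4, 2, 3]) =
    SS al be ga ![4,5,6,2,3,3] ![0,4,4,5,5,6] := by
  ext t s
  rw [Matrix.mul_apply, Fin.sum_univ_six]
  fin_cases s <;> simp [SS, embed3, ansatz, cons_val_five] <;>
    rw [ddQswap al be ga (![5,4,4,0,0,0] t) (![6,6,5,3,5,1] t) 5 0,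
        ddQswap al be ga (![5,4,4,0,0,0] t) (![6,6,5,3,5,1] t) 5 1] <;>
    first
    | exact masterddB al be ga _ _ 0 1 6 _ 5
        (hgen 0 1 5 (by decide) (by decide) (by decide))
        (hgen 0 6 5 (by decide) (by decide) (by decide))
        (hgen 1 6 5 (by decide) (by decide) (by decide))
    | exact masterddA al be ga _ _ 0 1 6 _ 5
        (hgen 0 1 5 (by decide) (by decide) (by decide))
        (hgen 0 6 5 (by decide) (by decide) (by decide))
        (hgen 1 6 5 (by decide) (by decide) (by decide))

theorem step5 (hgen : ∀ i j k : Fin 7, i ≠ j → i ≠ k → j ≠ k → dd al be ga i j k ≠ 0) :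
    SS al be ga ![4,5,6,2,3,3] ![0,4,4,5,5,6] *
      embed3 0 1 2 (ansatz al be ga 4 ![0, 5, 6] ![1, 2, 3]) =
    SS al be ga ![1,2,3,2,3,3] ![4,4,4,5,5,6] := by
  ext t s
  rw [Matrix.mul_apply, Fin.sum_univ_six]
  fin_cases s <;> simp [SS, embed3, ansatz, cons_val_five] <;>
    rw [ddQswap al be ga (![5,4,4,0,0,0] t) (![6,6,5,3,5,1] t) 4 0] <;>
    exact masterddA al be ga _ _ 0 5 6 _ 4
      (hgen 0 5 4 (by decide) (by decide) (by decide))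
      (hgen 0 6 4 (by decide) (by decide) (by decide))
      (hgen 5 6 4 (by decide) (by decide) (by decide))

theorem dd_zero12 (a b : Fin 7) : dd al be ga a a b = 0 := by
  simp [dd, Matrix.det_fin_three]
  try ring

theorem dd_zero13 (a b : Fin 7) : dd al be ga a b a = 0 := by
  simp [dd, Matrix.det_fin_three]
  try ring

theorem tri : (SS al be ga ![4,5,0,5,1,2] ![0,0,6,1,6,6]).BlockTriangular id := by
  intro i j h
  fin_cases i <;> fin_cases j <;>
    first
    | exact absurd h (by decide)
    | simp [SS, cons_val_five, dd_zero12, dd_zero13]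

theorem hdet (hgen : ∀ i j k : Fin 7, i ≠ j → i ≠ k → j ≠ k → dd al be ga i j k ≠ 0) :
    IsUnit (SS al be ga ![4,5,0,5,1,2] ![0,0,6,1,6,6]).det := by
  rw [isUnit_iff_ne_zero, Matrix.det_of_upperTriangular (tri al be ga), Fin.prod_univ_six]
  simp [SS, cons_val_five, mul_eq_zero,
    hgen 5 4 0 (by decide) (by decide) (by decide),
    hgen 6 4 0 (by decide) (by decide) (by decide),
    hgen 4 5 0 (by decide) (by decide) (by decide),
    hgen 6 5 0 (by decide) (by decide) (by decide),
    hgen 4 0 6 (by decide) (by decide) (by decide),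
    hgen 5 0 6 (by decide) (by decide) (by decide),
    hgen 0 5 1 (by decide) (by decide) (by decide),
    hgen 3 5 1 (by decide) (by decide) (by decide),
    hgen 0 1 6 (by decide) (by decide) (by decide),
    hgen 5 1 6 (by decide) (by decide) (by decide),
    hgen 0 2 6 (by decide) (by decide) (by decide),
    hgen 1 2 6 (by decide) (by decide) (by decide)]

end Steps
end HeptagonAux

open HeptagonAux

/-- The heptagon relation
`(A1)_{123} (A2)_{145} (A3)_{246} (A4)_{356} = (A7)_{356} (A6)_{245} (A5)_{123}`.
Vertices `1,…,7` are encoded as `0,…,6 : Fin 7`, positions `1,…,6` as `0,…,5 : Fin 6`. -/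
theorem heptagon_relation {F : Type*} [Field F] (al be ga : Fin 7 → F)
    (hgen : ∀ i j k : Fin 7, i ≠ j → i ≠ k → j ≠ k → dd al be ga i j k ≠ 0) :
    embed3 0 1 2 (ansatz al be ga 0 ![4, 5, 6] ![1, 2, 3]) *
      embed3 0 3 4 (ansatz al be ga 1 ![0, 5, 6] ![4, 2, 3]) *
      embed3 1 3 5 (ansatz al be ga 2 ![0, 1, 6] ![4, 5, 3]) *
      embed3 2 4 5 (ansatz al be ga 3 ![0, 1, 2] ![4, 5, 6]) =
    embed3 2 4 5 (ansatz al be ga 6 ![0, 1, 2] ![4, 5, 3]) *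
      embed3 1 3 4 (ansatz al be ga 5 ![0, 1, 6] ![4, 2, 3]) *
      embed3 0 1 2 (ansatz al be ga 4 ![0, 5, 6] ![1, 2, 3]) := by
  set T := SS al be ga ![4,5,0,5,1,2] ![0,0,6,1,6,6] with hT
  set L := embed3 0 1 2 (ansatz al be ga 0 ![4, 5, 6] ![1, 2, 3]) *
      embed3 0 3 4 (ansatz al be ga 1 ![0, 5, 6] ![4, 2, 3]) *
      embed3 1 3 5 (ansatz al be ga 2 ![0, 1, 6] ![4, 5, 3]) *
      embed3 2 4 5 (ansatz al be ga 3 ![0, 1, 2] ![4, 5, 6]) with hLdef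
  set R := embed3 2 4 5 (ansatz al be ga 6 ![0, 1, 2] ![4, 5, 3]) *
      embed3 1 3 4 (ansatz al be ga 5 ![0, 1, 6] ![4, 2, 3]) *
      embed3 0 1 2 (ansatz al be ga 4 ![0, 5, 6] ![1, 2, 3]) with hRdef
  have hL : T * L = SS al be ga ![1,2,3,2,3,3] ![4,4,4,5,5,6] := by
    rw [hLdef]
    simp only [← Matrix.mul_assoc]
    rw [hT, step1 al be ga hgen, step2 al be ga hgen, step3 al be ga hgen,
      step4 al be ga hgen]
  have hR : T * R = SS al be ga ![1,2,3,2,3,3] ![4,4,4,5,5,6] := by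
    rw [hRdef]
    simp only [← Matrix.mul_assoc]
    rw [hT, step7 al be ga hgen, step6 al be ga hgen, step5 al be ga hgen]
  have key : T * L = T * R := hL.trans hR.symm
  have hu : IsUnit T.det := by rw [hT]; exact hdet al be ga hgen
  have hinv : T⁻¹ * T = 1 := Matrix.nonsing_inv_mul _ hu
  calc L = (T⁻¹ * T) * L := by rw [hinv, Matrix.one_mul]
    _ = T⁻¹ * (T * L) := by rw [Matrix.mul_assoc]
    _ = T⁻¹ * (T * R) := by rw [key]
    _ = (T⁻¹ * T) * R := by rw [Matrix.mul_assoc]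
    _ = R := by rw [hinv, Matrix.one_mul]
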